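/- arXiv:2211.05681 — 3 statements merged into one kernel-verified Lean document; each statement's English description precedes it below -/
import Mathlib

section
/- Let s > 2 and let n = ⌊s⌋ so that n ≤ s < n+1. Then there exists a sequence m : ℕ → ℕ with m_i ∈ {n, n+1} for all i and, for every i ≥ 1, (n/(n+1)) · ∏_{j=1}^{i} (1/m_j) ≤ 1/s^i ≤ ((n+1)/n) · ∏_{j=1}^{i} (1/m_j). -/
noncomputable def laaksoAux (s : ℝ) (n : ℕ) : ℕ → ℕ × ℕ
  | 0 => (n, 1)
  | (i+1) =>
    let P := (laaksoAux s n i).2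
    if s ^ (i+1) ≤ ((n:ℝ)+1) * P then (n, P * n) else (n+1, P * (n+1))

/-- For `s > 2` with `n ≤ s < n+1`, there is a sequence `m` with `m i ∈ {n, n+1}` satisfying
`(n/(n+1)) ∏_{j=1}^i m_j⁻¹ ≤ s⁻ⁱ ≤ ((n+1)/n) ∏_{j=1}^i m_j⁻¹` for every `i ≥ 1`. -/
theorem laakso_sequence_exists (s : ℝ) (hs : 2 < s) (n : ℕ)
    (hn₁ : (n : ℝ) ≤ s) (hn₂ : s < (n : ℝ) + 1) :
    ∃ m : ℕ → ℕ, (∀ i, m i = n ∨ m i = n + 1) ∧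
      ∀ i, 1 ≤ i →
        ((n : ℝ) / ((n : ℝ) + 1)) * ∏ j ∈ Finset.Icc 1 i, ((m j : ℝ))⁻¹ ≤ 1 / s ^ i ∧
        1 / s ^ i ≤ (((n : ℝ) + 1) / (n : ℝ)) * ∏ j ∈ Finset.Icc 1 i, ((m j : ℝ))⁻¹ := by
  have hs0 : (0:ℝ) < s := by linarith
  have hn0 : (0:ℝ) < n := by
    have : (2:ℝ) < (n:ℝ) + 1 := lt_trans hs hn₂
    linarith
  have hn1 : (0:ℝ) < (n:ℝ) + 1 := by linarith
  refine ⟨fun i => (laaksoAux s n i).1, ?_, ?_⟩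
  · intro i
    cases i with
    | zero => left; rfl
    | succ i =>
      by_cases hc : s ^ (i+1) ≤ ((n:ℝ)+1) * (laaksoAux s n i).2
      · left; simp only [laaksoAux, if_pos hc]
      · right; simp only [laaksoAux, if_neg hc]
  have hP : ∀ i, ((laaksoAux s n i).2 : ℝ) = ∏ j ∈ Finset.Icc 1 i, ((laaksoAux s n j).1 : ℝ) := by
    intro i
    induction i with
    | zero => simp [laaksoAux]
    | succ i ih =>
      rw [Finset.prod_Icc_succ_top (by omega : 1 ≤ i + 1), ← ih]
      by_cases hc : s ^ (i+1) ≤ ((n:ℝ)+1) * (laaksoAux s n i).2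
      · simp only [laaksoAux, if_pos hc]; push_cast; ring
      · simp only [laaksoAux, if_neg hc]; push_cast; ring
  have hPpos : ∀ i, (0:ℝ) < ((laaksoAux s n i).2 : ℝ) := by
    intro i
    induction i with
    | zero => simp [laaksoAux]
    | succ i ih =>
      by_cases hc : s ^ (i+1) ≤ ((n:ℝ)+1) * (laaksoAux s n i).2
      · simp only [laaksoAux, if_pos hc]; push_cast; nlinarith
      · simp only [laaksoAux, if_neg hc]; push_cast; nlinarith
  have hInv : ∀ i, (n:ℝ) * (laaksoAux s n i).2 ≤ ((n:ℝ)+1) * s ^ i ∧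
      (n:ℝ) * s ^ i ≤ ((n:ℝ)+1) * (laaksoAux s n i).2 := by
    intro i
    induction i with
    | zero => simp [laaksoAux]
    | succ i ih =>
      have hpow : (0:ℝ) < s ^ i := pow_pos hs0 i
      have hpos := hPpos i
      obtain ⟨h1, h2⟩ := ih
      by_cases hc : s ^ (i+1) ≤ ((n:ℝ)+1) * (laaksoAux s n i).2
      · simp only [laaksoAux, if_pos hc]
        rw [pow_succ] at hc ⊢
        constructor
        · push_cast
          nlinarith [mul_le_mul_of_nonneg_left h1 hn0.le,
            mul_le_mul_of_nonneg_right hn₁ (mul_pos hn1 hpow).le]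
        · push_cast; nlinarith
      · simp only [laaksoAux, if_neg hc]
        push_neg at hc
        rw [pow_succ] at hc ⊢
        constructor
        · push_cast; nlinarith
        · push_cast
          nlinarith [mul_le_mul_of_nonneg_left h2 hn1.le,
            mul_le_mul_of_nonneg_right hn₂.le (mul_pos hn0 hpow).le]
  intro i hi
  have hpow : (0:ℝ) < s ^ i := pow_pos hs0 i
  have hpos := hPpos i
  obtain ⟨h1, h2⟩ := hInv i
  have hprodinv : ∏ j ∈ Finset.Icc 1 i, (((laaksoAux s n j).1 : ℝ))⁻¹
      = (((laaksoAux s n i).2 : ℝ))⁻¹ := by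
    rw [hP, ← Finset.prod_inv_distrib]
  simp only [hprodinv]
  set P : ℝ := ((laaksoAux s n i).2 : ℝ)
  have hPinv : (0:ℝ) ≤ P⁻¹ := inv_nonneg.mpr hpos.le
  constructor
  · rw [div_mul_eq_mul_div, div_le_div_iff₀ hn1 hpow, one_mul]
    calc (n:ℝ) * P⁻¹ * s ^ i = P⁻¹ * ((n:ℝ) * s ^ i) := by ring
      _ ≤ P⁻¹ * (((n:ℝ)+1) * P) := mul_le_mul_of_nonneg_left h2 hPinv
      _ = (n:ℝ)+1 := by field_simp
  · rw [div_mul_eq_mul_div, div_le_div_iff₀ hpow hn0]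
    calc (1:ℝ) * n = P⁻¹ * ((n:ℝ) * P) := by field_simp
      _ ≤ P⁻¹ * (((n:ℝ)+1) * s ^ i) := mul_le_mul_of_nonneg_left h1 hPinv
      _ = ((n:ℝ)+1) * P⁻¹ * s ^ i := by ring
end

section
/- For s = 3 (n = 3), a sequence m with m_i ∈ {3,4} satisfies (3/4)∏_{j=1}^{i} m_j^{-1} ≤ 3^{-i} ≤ (4/3)∏_{j=1}^{i} m_j^{-1} for all i if and only if m_i = 3 for all but at most one index i. -/
private lemma nat_ineq1 (c i : ℕ) (hc : c ≤ i) :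
    3 * 3 ^ i ≤ 4 * (4 ^ c * 3 ^ (i - c)) := by
  have h : 3 ^ i = 3 ^ c * 3 ^ (i - c) := by
    rw [← pow_add, Nat.add_sub_cancel' hc]
  rw [h, ← mul_assoc, ← mul_assoc]
  exact Nat.mul_le_mul_right _ (Nat.mul_le_mul (by norm_num) (Nat.pow_le_pow_left (by norm_num) c))

private lemma nat_ineq2 (c i : ℕ) (hc : 2 ≤ c) (hci : c ≤ i) :
    4 * 3 ^ i < 3 * (4 ^ c * 3 ^ (i - c)) := by
  have h : 3 ^ i = 3 ^ c * 3 ^ (i - c) := by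
    rw [← pow_add, Nat.add_sub_cancel' hci]
  rw [h, ← mul_assoc, ← mul_assoc]
  have hp : 0 < 3 ^ (i - c) := Nat.pow_pos (by norm_num)
  apply Nat.mul_lt_mul_of_lt_of_le _ le_rfl hp
  obtain ⟨k, rfl⟩ := Nat.exists_eq_add_of_le hc
  calc 4 * 3 ^ (2 + k) = 36 * 3 ^ k := by ring
    _ ≤ 36 * 4 ^ k := Nat.mul_le_mul_left _ (Nat.pow_le_pow_left (by norm_num) k)
    _ < 48 * 4 ^ k := Nat.mul_lt_mul_of_lt_of_le (by norm_num) le_rfl (Nat.pow_pos (by norm_num))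
    _ = 3 * 4 ^ (2 + k) := by ring

private lemma real_ineq1 (c i : ℕ) (hc : c ≤ i) :
    (3/4 : ℝ) * ((4:ℝ) ^ c * 3 ^ (i - c))⁻¹ ≤ 1 / 3 ^ i := by
  have hP : (0:ℝ) < (4:ℝ) ^ c * 3 ^ (i - c) := by positivity
  rw [show (3/4 : ℝ) * ((4:ℝ) ^ c * 3 ^ (i - c))⁻¹ = 3 / (4 * ((4:ℝ) ^ c * 3 ^ (i - c))) by
    field_simp]
  rw [div_le_div_iff₀ (by positivity) (by positivity)]
  have := nat_ineq1 c i hc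
  have : ((3 * 3 ^ i : ℕ) : ℝ) ≤ ((4 * (4 ^ c * 3 ^ (i - c)) : ℕ) : ℝ) := by exact_mod_cast this
  push_cast at this
  linarith

private lemma real_ineq2 (c i : ℕ) (hc : c ≤ 1) (hi : 1 ≤ i) :
    (1 / 3 ^ i : ℝ) ≤ (4/3 : ℝ) * ((4:ℝ) ^ c * 3 ^ (i - c))⁻¹ := by
  interval_cases c
  · simp only [pow_zero, one_mul, Nat.sub_zero]
    rw [show (4/3 : ℝ) * ((3:ℝ) ^ i)⁻¹ = 4 / (3 * 3 ^ i) by field_simp]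
    rw [div_le_div_iff₀ (by positivity) (by positivity)]
    nlinarith [pow_pos (show (0:ℝ) < 3 by norm_num) i]
  · have h3 : (3:ℝ) ^ i = 3 * 3 ^ (i - 1) := by
      rw [← pow_succ']
      congr 1
      omega
    rw [h3, pow_one]
    rw [show (4/3 : ℝ) * ((4:ℝ) * 3 ^ (i - 1))⁻¹ = 4 / (3 * (4 * 3 ^ (i-1))) by field_simp]
    rw [div_le_div_iff₀ (by positivity) (by positivity)]
    ring_nf
    nlinarith [pow_pos (show (0:ℝ) < 3 by norm_num) (i-1)]

private lemma real_ineq3 (c i : ℕ) (hc : 2 ≤ c) (hci : c ≤ i) :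
    ¬ ((1 / 3 ^ i : ℝ) ≤ (4/3 : ℝ) * ((4:ℝ) ^ c * 3 ^ (i - c))⁻¹) := by
  rw [not_le]
  rw [show (4/3 : ℝ) * ((4:ℝ) ^ c * 3 ^ (i - c))⁻¹ = 4 / (3 * ((4:ℝ) ^ c * 3 ^ (i - c))) by
    field_simp]
  rw [div_lt_div_iff₀ (by positivity) (by positivity)]
  have := nat_ineq2 c i hc hci
  have : ((4 * 3 ^ i : ℕ) : ℝ) < ((3 * (4 ^ c * 3 ^ (i - c)) : ℕ) : ℝ) := by exact_mod_cast this
  push_cast at this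
  linarith

/-- For `s = 3` (so `n = 3`), a sequence `m` with values in `{3,4}` satisfies
`(3/4) ∏_{j=1}^i m_j⁻¹ ≤ 3⁻ⁱ ≤ (4/3) ∏_{j=1}^i m_j⁻¹` for all `i ≥ 1` if and only if
`m_i = 3` for all but at most one index `i ≥ 1`. -/
theorem laakso_sequence_three (m : ℕ → ℕ) (hm : ∀ i, 1 ≤ i → m i = 3 ∨ m i = 4) :
    (∀ i, 1 ≤ i →
        (3/4 : ℝ) * ∏ j ∈ Finset.Icc 1 i, ((m j : ℝ))⁻¹ ≤ 1 / 3 ^ i ∧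
        (1 / 3 ^ i : ℝ) ≤ (4/3 : ℝ) * ∏ j ∈ Finset.Icc 1 i, ((m j : ℝ))⁻¹) ↔
      {i : ℕ | 1 ≤ i ∧ m i ≠ 3}.Subsingleton := by
  set c : ℕ → ℕ := fun i => ((Finset.Icc 1 i).filter (fun j => m j = 4)).card with hc
  have hcle : ∀ i, c i ≤ i := by
    intro i
    have := Finset.card_filter_le (Finset.Icc 1 i) (fun j => m j = 4)
    simpa [Nat.card_Icc] using this
  have hprod : ∀ i, ∏ j ∈ Finset.Icc 1 i, ((m j : ℝ))⁻¹ =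
      ((4:ℝ) ^ c i * 3 ^ (i - c i))⁻¹ := by
    intro i
    rw [Finset.prod_inv_distrib]
    congr 1
    rw [← Finset.prod_filter_mul_prod_filter_not (Finset.Icc 1 i) (fun j => m j = 4)]
    have h1 : ∏ j ∈ (Finset.Icc 1 i).filter (fun j => m j = 4), ((m j : ℝ)) = 4 ^ c i := by
      rw [Finset.prod_congr rfl (fun j hj => ?_), Finset.prod_const]
      simp only [Finset.mem_filter] at hj
      rw [hj.2]; norm_num
    have h2 : ∏ j ∈ (Finset.Icc 1 i).filter (fun j => ¬ m j = 4), ((m j : ℝ)) =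
        3 ^ (i - c i) := by
      have hcard : ((Finset.Icc 1 i).filter (fun j => ¬ m j = 4)).card = i - c i := by
        have := Finset.card_filter_add_card_filter_not
          (s := Finset.Icc 1 i) (p := fun j => m j = 4)
        simp only [Nat.card_Icc, Nat.add_sub_cancel] at this
        have hci : c i = ((Finset.Icc 1 i).filter (fun j => m j = 4)).card := rfl
        omega
      rw [Finset.prod_congr rfl (fun j hj => ?_), Finset.prod_const, hcard]
      simp only [Finset.mem_filter, Finset.mem_Icc] at hj
      rcases hm j hj.1.1 with h | h
      · rw [h]; norm_num
      · exact absurd h hj.2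
    rw [h1, h2]
  constructor
  · intro h a ha b hb
    by_contra hne
    simp only [Set.mem_setOf_eq] at ha hb
    set N := max a b with hN
    have hN1 : 1 ≤ N := le_trans ha.1 (le_max_left a b)
    have hma : m a = 4 := (hm a ha.1).resolve_left ha.2
    have hmb : m b = 4 := (hm b hb.1).resolve_left hb.2
    have haf : a ∈ (Finset.Icc 1 N).filter (fun j => m j = 4) := by
      simp [Finset.mem_Icc, ha.1, le_max_left a b, hma, hN]
    have hbf : b ∈ (Finset.Icc 1 N).filter (fun j => m j = 4) := by
      simp [Finset.mem_Icc, hb.1, le_max_right a b, hmb, hN]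
    have h2 : 2 ≤ c N := Finset.one_lt_card.mpr ⟨a, haf, b, hbf, hne⟩
    have := (h N hN1).2
    rw [hprod N] at this
    exact real_ineq3 (c N) N h2 (hcle N) this
  · intro h i hi
    have hc1 : c i ≤ 1 := by
      apply Finset.card_le_one.mpr
      intro a ha b hb
      simp only [Finset.mem_filter, Finset.mem_Icc] at ha hb
      exact h ⟨ha.1.1, by rw [ha.2]; norm_num⟩ ⟨hb.1.1, by rw [hb.2]; norm_num⟩
    rw [hprod i]
    exact ⟨real_ineq1 (c i) i (hcle i), real_ineq2 (c i) i hc1 hi⟩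
end

section
/- In the Laakso space with s = 3 and m_i ≡ 3, the distance between x = [0,0] and y = [1,1] equals 1; moreover the infinite monotone path whose lift consists of the vertical segments {Σ_{i=1}^{j} 2/3^i} × [Σ_{i=1}^{j} 1/3^i, Σ_{i=1}^{j+1} 1/3^i] for j ≥ 0 together with {1} × [1/2, 1] has total H¹-length Σ_{i≥1} 1/3^i + 1/2 = 1. -/
open Set MeasureTheory
open scoped ENNReal

noncomputable section

/-- The Cantor-type attractor of the IFS `f₀ x = x/s`, `f₁ x = x/s + (s-1)/s`. -/
def cantorF (s : ℝ) : Set ℝ :=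
  {x | ∃ a : ℕ → Bool, x = ∑' i : ℕ, (if a i then (s - 1) / s ^ (i + 1) else 0)}

/-- The set of wormhole levels of order `k` for the sequence `m`. -/
def wormholeJ (m : ℕ → ℕ) (k : ℕ) : Set ℝ :=
  {x | ∃ n : ℕ → ℕ, (∀ j, 1 ≤ j → j < k → n j < m j) ∧ 1 ≤ n k ∧ n k < m k ∧
    x = ∑ j ∈ Finset.Icc 1 k, (n j : ℝ) * ∏ h ∈ Finset.Icc 1 j, ((m h : ℝ))⁻¹}

/-- The base space `F × [0,1]`. -/
abbrev LaaksoBase (s : ℝ) : Type :=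
  {p : ℝ × ℝ // p.1 ∈ cantorF s ∧ p.2 ∈ Icc (0:ℝ) 1}

/-- The identification relation defining the Laakso space. -/
def laaksoRel (s : ℝ) (m : ℕ → ℕ) (p q : LaaksoBase s) : Prop :=
  p = q ∨ ∃ k : ℕ, 1 ≤ k ∧ (p : ℝ × ℝ).2 = (q : ℝ × ℝ).2 ∧
    (p : ℝ × ℝ).2 ∈ wormholeJ m k ∧ |(p : ℝ × ℝ).1 - (q : ℝ × ℝ).1| = (s - 1) / s ^ k

/-- The Laakso space `L = (F × [0,1]) / ∼`, with the quotient topology. -/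
abbrev Laakso (s : ℝ) (m : ℕ → ℕ) : Type := Quot (laaksoRel s m)

/-- The projection `π : F × [0,1] → L`. -/
def laaksoPi (s : ℝ) (m : ℕ → ℕ) : LaaksoBase s → Laakso s m := Quot.mk _

/-- The height function `h : L → [0,1]`. -/
def heightL (s : ℝ) (m : ℕ → ℕ) : Laakso s m → ℝ :=
  Quot.lift (fun p => (p : ℝ × ℝ).2) (by
    rintro p q (rfl | ⟨k, -, h2, -⟩)
    · rfl
    · exact h2)

instance (s : ℝ) : MeasurableSpace (LaaksoBase s) := borel _
instance (s : ℝ) : BorelSpace (LaaksoBase s) := ⟨rfl⟩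

/-- The distance on the Laakso space: the infimum of `H¹`-measures of lifts `Γ ⊆ F × [0,1]`
whose projection is (the image of) a path joining the two points. -/
def laaksoDist (s : ℝ) (m : ℕ → ℕ) (x y : Laakso s m) : ℝ≥0∞ :=
  ⨅ (Γ : Set (LaaksoBase s)) (_ : ∃ p : Path x y,
    laaksoPi s m '' Γ = Set.range p), μH[1] Γ

end

lemma zero_mem_cantorF : (0:ℝ) ∈ cantorF 3 := by
  refine ⟨fun _ => false, ?_⟩
  simp

lemma one_mem_cantorF : (1:ℝ) ∈ cantorF 3 := by
  refine ⟨fun _ => true, ?_⟩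
  have h : ∀ i : ℕ, (if (true : Bool) then ((3:ℝ) - 1) / 3 ^ (i + 1) else 0)
      = (2/3) * (1/3) ^ i := by
    intro i
    simp [pow_succ, div_eq_mul_inv]
    ring
  rw [tsum_congr h, tsum_mul_left, tsum_geometric_of_lt_one (by norm_num) (by norm_num)]
  norm_num

noncomputable section

/-- The `j`-th vertical segment `{Σ_{i=1}^j 2/3^i} × [Σ_{i=1}^j 1/3^i, Σ_{i=1}^{j+1} 1/3^i]`
of the lift of the infinite monotone path from `[0,0]` to `[1,1]`. -/
def seg (j : ℕ) : Set (LaaksoBase 3) :=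
  {p | (p : ℝ × ℝ).1 = ∑ i ∈ Finset.Icc 1 j, 2 / 3 ^ i ∧
    (p : ℝ × ℝ).2 ∈ Icc (∑ i ∈ Finset.Icc 1 j, (1:ℝ) / 3 ^ i)
      (∑ i ∈ Finset.Icc 1 (j + 1), (1:ℝ) / 3 ^ i)}

/-- The lift of the infinite monotone path: the countable union of the vertical segments
together with the final segment `{1} × [1/2, 1]`. -/
def infLift : Set (LaaksoBase 3) :=
  (⋃ j : ℕ, seg j) ∪ {p | (p : ℝ × ℝ).1 = 1 ∧ (p : ℝ × ℝ).2 ∈ Icc (1/2 : ℝ) 1}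

end

noncomputable section
namespace Lk

def aa (j : ℕ) : ℝ := ∑ i ∈ Finset.Icc 1 j, (1:ℝ) / 3 ^ i
def bb (j : ℕ) : ℝ := ∑ i ∈ Finset.Icc 1 j, (2:ℝ) / 3 ^ i

lemma aa_zero : aa 0 = 0 := by simp [aa]
lemma bb_zero : bb 0 = 0 := by simp [bb]
lemma aa_succ (j : ℕ) : aa (j+1) = aa j + 1/3^(j+1) := by
  rw [aa, aa, Finset.sum_Icc_succ_top (by omega)]
lemma bb_succ (j : ℕ) : bb (j+1) = bb j + 2/3^(j+1) := by
  rw [bb, bb, Finset.sum_Icc_succ_top (by omega)]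
lemma aa_eq (j : ℕ) : aa j = (1 - (1/3:ℝ)^j)/2 := by
  induction j with
  | zero => simp [aa_zero]
  | succ n ih => rw [aa_succ, ih]; simp only [one_div_pow]; ring
lemma bb_eq (j : ℕ) : bb j = 1 - (1/3:ℝ)^j := by
  induction j with
  | zero => simp [bb_zero]
  | succ n ih => rw [bb_succ, ih]; simp only [one_div_pow]; ring
lemma bb_eq_two_aa (j : ℕ) : bb j = 2 * aa j := by rw [aa_eq, bb_eq]; ring
lemma aa_lt_half (j : ℕ) : aa j < 1/2 := by
  rw [aa_eq]; have : (0:ℝ) < (1/3)^j := by positivity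
  linarith
lemma aa_nonneg (j : ℕ) : 0 ≤ aa j := by
  rw [aa_eq]; have : ((1/3:ℝ))^j ≤ 1 := pow_le_one₀ (by norm_num) (by norm_num)
  linarith
lemma aa_lt_succ (j : ℕ) : aa j < aa (j+1) := by
  rw [aa_succ]; have : (0:ℝ) < 1/3^(j+1) := by positivity
  linarith
lemma aa_strictMono : StrictMono aa := strictMono_nat_of_lt_succ aa_lt_succ
lemma aa_mono : Monotone aa := aa_strictMono.monotone
lemma bb_lt_one (j : ℕ) : bb j < 1 := by
  rw [bb_eq]; have : (0:ℝ) < (1/3)^j := by positivity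
  linarith
lemma bb_strictMono : StrictMono bb := by
  intro i j hij
  rw [bb_eq, bb_eq]
  have := pow_lt_pow_right_of_lt_one₀ (by norm_num : (0:ℝ) < 1/3) (by norm_num) hij
  linarith

lemma bb_mem_cantorF (j : ℕ) : bb j ∈ cantorF 3 := by
  refine ⟨fun i => decide (i < j), ?_⟩
  have h1 : ∑' i : ℕ, (if decide (i < j) then ((3:ℝ) - 1) / 3 ^ (i + 1) else 0)
      = ∑ i ∈ Finset.range j, (2:ℝ) / 3 ^ (i+1) := by
    rw [tsum_eq_sum (s := Finset.range j)]
    · apply Finset.sum_congr rfl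
      intro i hi
      simp only [Finset.mem_range] at hi
      simp [hi]
      norm_num
    · intro i hi
      simp only [Finset.mem_range, not_lt] at hi
      simp [Nat.not_lt.mpr hi]
  rw [h1, bb, show Finset.Icc 1 j = Finset.Ico 1 (j+1) by rfl,
    Finset.sum_Ico_eq_sum_range]
  simp [add_comm]

lemma aa_mem_worm (k : ℕ) (hk : 1 ≤ k) : aa k ∈ wormholeJ (fun _ => 3) k := by
  refine ⟨fun _ => 1, fun _ _ _ => by norm_num, le_refl 1, by norm_num, ?_⟩
  rw [aa]
  apply Finset.sum_congr rfl
  intro j hj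
  rw [Finset.prod_const, Nat.card_Icc]
  simp

-- clamp
def cl (t : ℝ) : ℝ := min 1 (max 0 t)
lemma cl_mem (t : ℝ) : cl t ∈ Icc (0:ℝ) 1 :=
  ⟨le_min zero_le_one (le_max_left 0 t), min_le_left _ _⟩
lemma cl_eq {t : ℝ} (h0 : 0 ≤ t) (h1 : t ≤ 1) : cl t = t := by
  rw [cl, max_eq_right h0, min_eq_right h1]
lemma cl_cont : Continuous cl := continuous_const.min (continuous_const.max continuous_id)
lemma cl_mono : Monotone cl := fun a b h => min_le_min le_rfl (max_le_max le_rfl h)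

def JJ (t : ℝ) : ℕ := sInf {j | t < aa (j+1)}

lemma exists_lt_aa {t : ℝ} (ht : t < 1/2) : ∃ j, t < aa (j+1) := by
  obtain ⟨n, hn⟩ := exists_pow_lt_of_lt_one (by linarith : (0:ℝ) < 1 - 2*t)
    (by norm_num : (1/3:ℝ) < 1)
  refine ⟨n, ?_⟩
  rw [aa_eq]
  have : ((1/3:ℝ))^(n+1) ≤ (1/3)^n := by
    apply pow_le_pow_of_le_one (by norm_num) (by norm_num) (by omega)
  nlinarith

lemma JJ_spec {t : ℝ} (ht : t < 1/2) : t < aa (JJ t + 1) :=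
  Nat.sInf_mem (exists_lt_aa ht)

lemma JJ_eq {t : ℝ} (j : ℕ) (h1 : aa j ≤ t) (h2 : t < aa (j+1)) : JJ t = j := by
  have hmem : j ∈ {j | t < aa (j+1)} := h2
  apply le_antisymm (Nat.sInf_le hmem)
  show j ≤ JJ t
  by_contra hc
  push_neg at hc
  have hJ : t < aa (JJ t + 1) := Nat.sInf_mem ⟨j, hmem⟩
  have : aa (JJ t + 1) ≤ aa j := aa_mono (by omega)
  linarith

lemma JJ_eq_zero {t : ℝ} (h : t < aa 1) : JJ t = 0 :=
  Nat.sInf_eq_zero.mpr (Or.inl h)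

lemma aa_JJ_le {t : ℝ} (h0 : 0 ≤ t) (ht : t < 1/2) : aa (JJ t) ≤ t := by
  rcases Nat.eq_zero_or_pos (JJ t) with h | h
  · rw [h, aa_zero]; exact h0
  · by_contra hc
    push_neg at hc
    have : JJ t ≤ JJ t - 1 := Nat.sInf_le (by
      show t < aa (JJ t - 1 + 1)
      have he : JJ t - 1 + 1 = JJ t := by omega
      rw [he]; exact hc)
    omega

def beta (t : ℝ) : ℝ := if t < 1/2 then bb (JJ t) else 1

lemma one_mem_cantorF' : (1:ℝ) ∈ cantorF 3 := by
  refine ⟨fun _ => true, ?_⟩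
  have h : ∀ i : ℕ, (if (true : Bool) then ((3:ℝ) - 1) / 3 ^ (i + 1) else 0)
      = (2/3) * (1/3) ^ i := by
    intro i
    simp [pow_succ, div_eq_mul_inv]
    ring
  rw [tsum_congr h, tsum_mul_left, tsum_geometric_of_lt_one (by norm_num) (by norm_num)]
  norm_num

lemma beta_mem (t : ℝ) : beta t ∈ cantorF 3 := by
  rw [beta]
  split
  · exact bb_mem_cantorF _
  · exact one_mem_cantorF'

lemma beta_eq_on {j : ℕ} {t : ℝ} (h1 : aa j ≤ t) (h2 : t < aa (j+1)) : beta t = bb j := by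
  have : t < 1/2 := lt_of_lt_of_le (h2.trans_le (aa_lt_half _).le) le_rfl
  rw [beta, if_pos this, JJ_eq j h1 h2]

lemma beta_eq_one {t : ℝ} (h : 1/2 ≤ t) : beta t = 1 := by
  rw [beta, if_neg (not_lt.mpr h)]

lemma beta_dist (t : ℝ) : |beta t - 1| ≤ 6 * |t - 1/2| := by
  rcases lt_or_ge t (1/2) with h | h
  · rw [beta, if_pos h, bb_eq]
    have hs := JJ_spec h
    rw [aa_eq] at hs
    have h2 : ((1/3:ℝ))^(JJ t + 1) < 1 - 2*t := by linarith
    have h3 : ((1/3:ℝ))^(JJ t + 1) = (1/3) * (1/3)^(JJ t) := by ring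
    have h4 : (0:ℝ) < (1/3)^(JJ t) := by positivity
    rw [abs_of_nonpos (by linarith), abs_of_neg (by linarith)]
    nlinarith
  · rw [beta_eq_one h]
    simp only [sub_self, abs_zero]
    positivity

lemma beta_tendsto : Filter.Tendsto beta (nhds (1/2)) (nhds 1) := by
  have h0 : Filter.Tendsto (fun t : ℝ => beta t - 1) (nhds (1/2)) (nhds 0) := by
    apply squeeze_zero_norm (fun t => beta_dist t)
    have : Filter.Tendsto (fun t : ℝ => 6 * |t - 1/2|) (nhds (1/2)) (nhds (6 * |1/2 - 1/2|)) := by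
      apply Filter.Tendsto.const_mul
      exact ((continuous_id.sub continuous_const).abs).tendsto _
    simpa using this
  have := h0.add_const 1
  simpa using this


abbrev M : ℕ → ℕ := fun _ => 3

def gam (t : ℝ) : LaaksoBase 3 := ⟨(beta t, cl t), beta_mem t, cl_mem t⟩
def ff (t : ℝ) : Laakso 3 M := laaksoPi 3 M (gam t)

lemma rel_step (j : ℕ) :
    laaksoPi 3 M ⟨(bb (j+1), aa (j+1)), bb_mem_cantorF _, ⟨(aa_nonneg _), (aa_lt_half _).le.trans (by norm_num)⟩⟩
    = laaksoPi 3 M ⟨(bb j, aa (j+1)), bb_mem_cantorF _, ⟨(aa_nonneg _), (aa_lt_half _).le.trans (by norm_num)⟩⟩ := by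
  apply Quot.sound
  refine Or.inr ⟨j+1, by omega, rfl, aa_mem_worm _ (by omega), ?_⟩
  show |bb (j+1) - bb j| = (3-1)/3^(j+1)
  rw [bb_succ]
  have h2 : (0:ℝ) < 2/3^(j+1) := by positivity
  rw [abs_of_nonneg (by linarith)]
  ring_nf

lemma pi_eq_of_proofs {x y : ℝ} (hx hx' : x ∈ cantorF 3) (hy hy' : y ∈ Icc (0:ℝ) 1) :
    laaksoPi 3 M ⟨(x, y), hx, hy⟩ = laaksoPi 3 M ⟨(x, y), hx', hy'⟩ := rfl

lemma cont_aux {x : ℝ} (hx : x ∈ cantorF 3) :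
    Continuous (fun t : ℝ => laaksoPi 3 M ⟨(x, cl t), hx, cl_mem t⟩) := by
  apply continuous_quot_mk.comp
  apply Continuous.subtype_mk
  exact continuous_const.prodMk cl_cont

lemma ff_eq_aux {x : ℝ} (hx : x ∈ cantorF 3) {t : ℝ} (h : beta t = x) :
    ff t = laaksoPi 3 M ⟨(x, cl t), hx, cl_mem t⟩ := by
  subst h; rfl

lemma ff_cont : Continuous (ff : ℝ → Laakso 3 M) := by
  rw [continuous_iff_continuousAt]
  intro t
  rcases lt_trichotomy t (1/2 : ℝ) with ht | ht | ht
  · -- t < 1/2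
    rcases lt_or_ge t (aa 1) with h1 | h1
    · -- constant bb 0 on Iio (aa 1)
      apply ((cont_aux (bb_mem_cantorF 0)).continuousAt).congr_of_eventuallyEq
      apply Filter.eventuallyEq_of_mem (Iio_mem_nhds h1)
      intro s hs
      exact ff_eq_aux (bb_mem_cantorF 0) (by
        rw [beta, if_pos (lt_trans hs (aa_lt_half 1)), JJ_eq_zero hs])
    · -- aa 1 ≤ t < 1/2
      have hsp : t < aa (JJ t + 1) := JJ_spec ht
      have hle : aa (JJ t) ≤ t := aa_JJ_le (le_trans (aa_nonneg 1) h1) ht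
      rcases eq_or_lt_of_le hle with heq | hlt
      · -- t = aa (JJ t) : left/right continuity
        have hj1 : 1 ≤ JJ t := by
          by_contra hc
          push_neg at hc
          have h0 : JJ t = 0 := by omega
          rw [h0, aa_zero] at heq
          have : (0:ℝ) < aa 1 := by
            have := aa_lt_succ 0; rw [aa_zero] at this; exact this
          linarith
        obtain ⟨j', hjj⟩ : ∃ j', JJ t = j' + 1 := ⟨JJ t - 1, by omega⟩
        rw [hjj] at hsp hle heq
        rw [continuousAt_iff_continuous_left_right]
        constructor
        · -- left: congr with bb j' on Icc (aa j') (aa (j'+1))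
          apply ContinuousWithinAt.mono_of_mem_nhdsWithin
            (s := Iic t) (t := Icc (aa j') (aa (j'+1)))
          swap
          · apply Icc_mem_nhdsLE_of_mem
            rw [← heq]
            exact ⟨aa_lt_succ j', le_rfl⟩
          refine ContinuousWithinAt.congr
            ((cont_aux (bb_mem_cantorF j')).continuousWithinAt) ?_ ?_
          · intro y hy
            rcases eq_or_lt_of_le hy.2 with hy2 | hy2
            · -- y = aa (j'+1): use wormhole identification
              have hcl : cl y = aa (j'+1) := by
                rw [hy2, cl_eq (aa_nonneg _) ((aa_lt_half _).le.trans (by norm_num))]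
              have e1 : ff y = laaksoPi 3 M ⟨(bb (j'+1), aa (j'+1)), bb_mem_cantorF _,
                  ⟨aa_nonneg _, (aa_lt_half _).le.trans (by norm_num)⟩⟩ := by
                have hb : beta y = bb (j'+1) := by
                  rw [hy2, heq]
                  exact beta_eq_on hle hsp
                rw [ff_eq_aux (bb_mem_cantorF (j'+1)) hb]
                congr 1
                exact Subtype.ext (by simp [hcl])
              rw [e1, rel_step j']
              congr 1
              exact Subtype.ext (by simp [hcl])
            · -- y < aa (j'+1)
              exact ff_eq_aux (bb_mem_cantorF _) (beta_eq_on hy.1 hy2)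
          · -- at the point t = aa (j'+1) itself
            have hcl : cl t = aa (j'+1) := by
              rw [← heq, cl_eq (aa_nonneg _) ((aa_lt_half _).le.trans (by norm_num))]
            have hb : beta t = bb (j'+1) := beta_eq_on hle hsp
            rw [ff_eq_aux (bb_mem_cantorF (j'+1)) hb]
            have e2 : (⟨(bb (j'+1), cl t), bb_mem_cantorF _, cl_mem t⟩ : LaaksoBase 3)
                = ⟨(bb (j'+1), aa (j'+1)), bb_mem_cantorF _,
                  ⟨aa_nonneg _, (aa_lt_half _).le.trans (by norm_num)⟩⟩ := Subtype.ext (by simp [hcl])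
            rw [e2, rel_step j']
            congr 1
            exact Subtype.ext (by simp [hcl])
        · -- right: congr with bb (j'+1) on Ico (aa (j'+1)) (aa (j'+2))
          apply ContinuousWithinAt.mono_of_mem_nhdsWithin
            (s := Ici t) (t := Ico (aa (j'+1)) (aa (j'+2)))
          swap
          · apply Ico_mem_nhdsGE_of_mem
            rw [← heq]
            exact ⟨le_rfl, aa_lt_succ _⟩
          refine ContinuousWithinAt.congr
            ((cont_aux (bb_mem_cantorF (j'+1))).continuousWithinAt) ?_ ?_
          · intro y hy
            exact ff_eq_aux (bb_mem_cantorF _) (beta_eq_on hy.1 hy.2)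
          · exact ff_eq_aux (bb_mem_cantorF _) (beta_eq_on hle hsp)
      · -- aa j < t < aa (j+1): locally constant
        apply ((cont_aux (bb_mem_cantorF (JJ t))).continuousAt).congr_of_eventuallyEq
        apply Filter.eventuallyEq_of_mem (Ioo_mem_nhds hlt hsp)
        intro s hs
        exact ff_eq_aux (bb_mem_cantorF _) (beta_eq_on hs.1.le hs.2)
  · -- t = 1/2 : squeeze
    subst ht
    have hβ : ContinuousAt beta (1/2) := by
      rw [ContinuousAt, beta_eq_one le_rfl]
      exact beta_tendsto
    have hγ : ContinuousAt gam (1/2) := by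
      exact (Topology.IsInducing.subtypeVal.continuousAt_iff).mpr (hβ.prodMk cl_cont.continuousAt)
    exact (continuous_quot_mk.continuousAt).comp hγ
  · -- t > 1/2
    apply ((cont_aux one_mem_cantorF').continuousAt).congr_of_eventuallyEq
    apply Filter.eventuallyEq_of_mem (Ioi_mem_nhds ht)
    intro s hs
    exact ff_eq_aux one_mem_cantorF' (beta_eq_one (le_of_lt hs))


def x0 : Laakso 3 M := laaksoPi 3 M ⟨((0:ℝ), 0), zero_mem_cantorF, by norm_num⟩
def y1 : Laakso 3 M := laaksoPi 3 M ⟨((1:ℝ), 1), one_mem_cantorF, by norm_num⟩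

lemma aa_one_pos : (0:ℝ) < aa 1 := by
  have := aa_lt_succ 0; rwa [aa_zero] at this

lemma ff_zero : ff 0 = x0 := by
  have hb : beta 0 = 0 := by
    rw [beta, if_pos (by norm_num), JJ_eq_zero aa_one_pos, bb_zero]
  rw [ff_eq_aux zero_mem_cantorF hb, x0]
  congr 1
  exact Subtype.ext (by simp [cl_eq le_rfl zero_le_one])

lemma ff_one : ff 1 = y1 := by
  rw [ff_eq_aux one_mem_cantorF (beta_eq_one (by norm_num)), y1]
  congr 1
  exact Subtype.ext (by simp [cl_eq zero_le_one le_rfl])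

def pth : Path x0 y1 where
  toFun := fun t => ff ↑t
  continuous_toFun := ff_cont.comp continuous_subtype_val
  source' := ff_zero
  target' := ff_one

lemma seg_def (j : ℕ) :
    seg j = {p : LaaksoBase 3 | (p : ℝ × ℝ).1 = bb j ∧
      (p : ℝ × ℝ).2 ∈ Icc (aa j) (aa (j+1))} := rfl

lemma aa_mem_Icc01 (j : ℕ) : aa j ∈ Icc (0:ℝ) 1 :=
  ⟨aa_nonneg j, (aa_lt_half j).le.trans (by norm_num)⟩

lemma gam_mem {t : ℝ} (ht : t ∈ Icc (0:ℝ) 1) : gam t ∈ infLift := by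
  rcases lt_or_ge t (1/2 : ℝ) with h | h
  · left
    refine mem_iUnion.mpr ⟨JJ t, ?_⟩
    rw [seg_def]
    refine ⟨?_, ?_⟩
    · show beta t = bb (JJ t)
      rw [beta, if_pos h]
    · show cl t ∈ Icc (aa (JJ t)) (aa (JJ t + 1))
      rw [cl_eq ht.1 ht.2]
      exact ⟨aa_JJ_le ht.1 h, (JJ_spec h).le⟩
  · right
    refine ⟨beta_eq_one h, ?_⟩
    show cl t ∈ Icc (1/2 : ℝ) 1
    rw [cl_eq ht.1 ht.2]
    exact ⟨h, ht.2⟩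

lemma pi_image : laaksoPi 3 M '' infLift = Set.range (fun t : unitInterval => ff ↑t) := by
  apply Subset.antisymm
  · rintro _ ⟨q, hq, rfl⟩
    rcases hq with hq | hq
    · obtain ⟨j, hj⟩ := mem_iUnion.mp hq
      rw [seg_def] at hj
      obtain ⟨h1, h2⟩ := hj
      set t := (q : ℝ × ℝ).2 with htdef
      have ht01 : t ∈ Icc (0:ℝ) 1 :=
        ⟨(aa_nonneg j).trans h2.1, h2.2.trans ((aa_lt_half _).le.trans (by norm_num))⟩
      have hcl : cl t = t := cl_eq ht01.1 ht01.2
      rcases eq_or_lt_of_le h2.2 with heq | hlt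
      · -- t = aa (j+1): wormhole
        refine ⟨⟨t, ht01⟩, ?_⟩
        show ff t = laaksoPi 3 M q
        have hb : beta t = bb (j+1) := by
          have h1' : aa (j+1) ≤ t := le_of_eq heq.symm
          have h2' : t < aa (j+2) := lt_of_le_of_lt (le_of_eq heq) (aa_lt_succ (j+1))
          exact beta_eq_on h1' h2'
        rw [ff_eq_aux (bb_mem_cantorF (j+1)) hb]
        have e1 : (⟨(bb (j+1), cl t), bb_mem_cantorF _, cl_mem t⟩ : LaaksoBase 3)
            = ⟨(bb (j+1), aa (j+1)), bb_mem_cantorF _, aa_mem_Icc01 _⟩ :=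
          Subtype.ext (by simp [hcl, ← heq])
        rw [e1, rel_step j]
        congr 1
        exact Subtype.ext (by simp [← h1, ← heq, htdef])
      · -- t < aa (j+1)
        refine ⟨⟨t, ht01⟩, ?_⟩
        show ff t = laaksoPi 3 M q
        rw [ff_eq_aux (bb_mem_cantorF j) (beta_eq_on h2.1 hlt)]
        congr 1
        exact Subtype.ext (Prod.ext h1.symm hcl)
    · obtain ⟨h1, h2⟩ := hq
      set t := (q : ℝ × ℝ).2 with htdef
      have ht01 : t ∈ Icc (0:ℝ) 1 := ⟨le_trans (by norm_num) h2.1, h2.2⟩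
      refine ⟨⟨t, ht01⟩, ?_⟩
      show ff t = laaksoPi 3 M q
      rw [ff_eq_aux one_mem_cantorF' (beta_eq_one h2.1)]
      congr 1
      exact Subtype.ext (Prod.ext h1.symm (cl_eq ht01.1 ht01.2))
  · rintro _ ⟨t, rfl⟩
    exact ⟨gam ↑t, gam_mem t.2, rfl⟩

lemma height_mono : Monotone (fun t : unitInterval => heightL 3 M (pth t)) := by
  intro a b hab
  show cl ↑a ≤ cl ↑b
  exact cl_mono hab

/-- The final vertical segment. -/
def fin3 : Set (LaaksoBase 3) :=
  {p | (p : ℝ × ℝ).1 = 1 ∧ (p : ℝ × ℝ).2 ∈ Icc (1/2 : ℝ) 1}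

lemma infLift_eq : infLift = (⋃ j : ℕ, seg j) ∪ fin3 := rfl

lemma vert_isometry (c : ℝ) : Isometry (fun t : ℝ => ((c, t) : ℝ × ℝ)) := by
  apply Isometry.of_dist_eq
  intro a b
  rw [Prod.dist_eq]
  simp [dist_self]

lemma val_isometry : Isometry (Subtype.val : LaaksoBase 3 → ℝ × ℝ) :=
  fun _ _ => rfl

lemma coe_seg (j : ℕ) :
    (Subtype.val '' seg j : Set (ℝ × ℝ)) =
      (fun t : ℝ => ((bb j, t) : ℝ × ℝ)) '' Icc (aa j) (aa (j+1)) := by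
  ext z
  constructor
  · rintro ⟨p, hp, rfl⟩
    rw [seg_def] at hp
    exact ⟨(p : ℝ × ℝ).2, hp.2, Prod.ext_iff.mpr ⟨hp.1.symm, rfl⟩⟩
  · rintro ⟨t, ht, rfl⟩
    refine ⟨⟨(bb j, t), bb_mem_cantorF j, ?_⟩, ?_, rfl⟩
    · exact ⟨(aa_nonneg j).trans ht.1, ht.2.trans ((aa_lt_half _).le.trans (by norm_num))⟩
    · rw [seg_def]; exact ⟨rfl, ht⟩

lemma coe_fin3 :
    (Subtype.val '' fin3 : Set (ℝ × ℝ)) =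
      (fun t : ℝ => ((1:ℝ), t) : ℝ → ℝ × ℝ) '' Icc (1/2 : ℝ) 1 := by
  ext z
  constructor
  · rintro ⟨p, hp, rfl⟩
    exact ⟨(p : ℝ × ℝ).2, hp.2, Prod.ext_iff.mpr ⟨hp.1.symm, rfl⟩⟩
  · rintro ⟨t, ht, rfl⟩
    exact ⟨⟨(1, t), one_mem_cantorF', ⟨le_trans (by norm_num) ht.1, ht.2⟩⟩, ⟨rfl, ht⟩, rfl⟩

lemma measure_seg (j : ℕ) : μH[1] (seg j) = ENNReal.ofReal (1/3^(j+1)) := by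
  have h1 := val_isometry.hausdorffMeasure_image
    (Or.inl (by norm_num : (0:ℝ) ≤ 1)) (seg j)
  rw [← h1, coe_seg, (vert_isometry (bb j)).hausdorffMeasure_image
    (Or.inl (by norm_num : (0:ℝ) ≤ 1)), MeasureTheory.hausdorffMeasure_real,
    Real.volume_Icc, aa_succ]
  ring_nf

lemma measure_fin3 : μH[1] fin3 = ENNReal.ofReal (1/2) := by
  have h1 := val_isometry.hausdorffMeasure_image
    (Or.inl (by norm_num : (0:ℝ) ≤ 1)) fin3
  rw [← h1, coe_fin3, (vert_isometry 1).hausdorffMeasure_image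
    (Or.inl (by norm_num : (0:ℝ) ≤ 1)), MeasureTheory.hausdorffMeasure_real,
    Real.volume_Icc]
  norm_num

lemma seg_measurable (j : ℕ) : MeasurableSet (seg j) := by
  have : seg j = Subtype.val ⁻¹' (({bb j} : Set ℝ) ×ˢ Icc (aa j) (aa (j+1))) := by
    rw [seg_def]; ext p
    simp only [mem_setOf_eq, mem_preimage, Set.mem_prod, mem_singleton_iff, mem_Icc]
  rw [this]
  exact ((isClosed_singleton.prod isClosed_Icc).preimage continuous_subtype_val).measurableSet

lemma fin3_measurable : MeasurableSet fin3 := by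
  have : fin3 = Subtype.val ⁻¹' (({(1:ℝ)} : Set ℝ) ×ˢ Icc (1/2 : ℝ) 1) := by
    ext p
    simp only [fin3, mem_setOf_eq, mem_preimage, Set.mem_prod, mem_singleton_iff, mem_Icc]
  rw [this]
  exact ((isClosed_singleton.prod isClosed_Icc).preimage continuous_subtype_val).measurableSet

lemma seg_disjoint : Pairwise (Function.onFun Disjoint seg) := by
  intro i j hij
  rw [Function.onFun, Set.disjoint_left]
  intro p hpi hpj
  rw [seg_def] at hpi hpj
  exact hij (bb_strictMono.injective (hpi.1.symm.trans hpj.1))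

lemma union_fin3_disjoint : Disjoint (⋃ j : ℕ, seg j) fin3 := by
  rw [Set.disjoint_left]
  intro p hp hp2
  obtain ⟨j, hj⟩ := mem_iUnion.mp hp
  rw [seg_def] at hj
  exact absurd (hj.1.symm.trans hp2.1) (ne_of_lt (bb_lt_one j))

lemma tsum_third : (∑' i : ℕ, (1:ℝ) / 3 ^ (i + 1)) = 1/2 := by
  have h : ∀ i : ℕ, (1:ℝ) / 3 ^ (i + 1) = (1/3) * (1/3) ^ i := by
    intro i
    rw [pow_succ, one_div_pow]
    ring
  rw [tsum_congr h, tsum_mul_left, tsum_geometric_of_lt_one (by norm_num) (by norm_num)]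
  norm_num

lemma measure_infLift : μH[1] infLift = 1 := by
  rw [infLift_eq, measure_union union_fin3_disjoint fin3_measurable,
    measure_iUnion seg_disjoint seg_measurable, measure_fin3]
  have h1 : ∀ j : ℕ, μH[1] (seg j) = ENNReal.ofReal (1/3^(j+1)) := measure_seg
  rw [tsum_congr h1, ← ENNReal.ofReal_tsum_of_nonneg (fun n => by positivity)
    (by
      have h : ∀ i : ℕ, (1:ℝ) / 3 ^ (i + 1) = (1/3) * (1/3) ^ i := by
        intro i; rw [pow_succ, one_div_pow]; ring
      rw [funext h]
      exact (summable_geometric_of_lt_one (by norm_num) (by norm_num)).mul_left _),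
    tsum_third, ← ENNReal.ofReal_add (by norm_num) (by norm_num)]
  norm_num

lemma height_cont : Continuous (heightL 3 M) :=
  continuous_quot_lift _ (continuous_snd.comp continuous_subtype_val)

lemma snd_lip : LipschitzWith 1 (fun q : LaaksoBase 3 => (q : ℝ × ℝ).2) := by
  apply LipschitzWith.mk_one
  intro a b
  rw [Subtype.dist_eq, Prod.dist_eq]
  exact le_max_right _ _

lemma lower_bound (Γ : Set (LaaksoBase 3)) (p : Path x0 y1)
    (h : laaksoPi 3 M '' Γ = Set.range p) : 1 ≤ μH[1] Γ := by
  have him : Icc (0:ℝ) 1 ⊆ (fun q : LaaksoBase 3 => (q : ℝ × ℝ).2) '' Γ := by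
    intro u hu
    have hg : ContinuousOn (fun s : ℝ => heightL 3 M (p.extend s)) (Icc 0 1) :=
      (height_cont.comp p.continuous_extend).continuousOn
    have h0 : heightL 3 M (p.extend 0) = 0 := by rw [p.extend_zero]; rfl
    have h1 : heightL 3 M (p.extend 1) = 1 := by rw [p.extend_one]; rfl
    have hiv := intermediate_value_Icc (zero_le_one) hg
    rw [h0, h1] at hiv
    obtain ⟨s, hs, hsu'⟩ := hiv hu
    have hsu : heightL 3 M (p.extend s) = u := hsu'
    rw [p.extend_apply hs] at hsu
    have hmem : p ⟨s, hs⟩ ∈ laaksoPi 3 M '' Γ := h ▸ Set.mem_range_self _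
    obtain ⟨q, hq, hpq⟩ := hmem
    refine ⟨q, hq, ?_⟩
    show heightL 3 M (laaksoPi 3 M q) = u
    rw [hpq]; exact hsu
  have h2 : μH[1] ((fun q : LaaksoBase 3 => (q : ℝ × ℝ).2) '' Γ) ≤ μH[1] Γ := by
    have := snd_lip.hausdorffMeasure_image_le (by norm_num : (0:ℝ) ≤ 1) Γ
    simpa using this
  have h3 : (1 : ℝ≥0∞) = μH[1] (Icc (0:ℝ) 1) := by
    rw [MeasureTheory.hausdorffMeasure_real, Real.volume_Icc]
    norm_num
  calc (1 : ℝ≥0∞) = μH[1] (Icc (0:ℝ) 1) := h3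
    _ ≤ μH[1] ((fun q : LaaksoBase 3 => (q : ℝ × ℝ).2) '' Γ) := measure_mono him
    _ ≤ μH[1] Γ := h2

lemma dist_eq_one : laaksoDist 3 M x0 y1 = 1 := by
  apply le_antisymm
  · have hle : laaksoDist 3 M x0 y1 ≤ μH[1] infLift := by
      apply iInf_le_of_le infLift
      apply iInf_le_of_le ⟨pth, pi_image⟩
      exact le_rfl
    rw [measure_infLift] at hle
    exact hle
  · rw [laaksoDist]
    refine le_iInf fun Γ => le_iInf fun hex => ?_
    obtain ⟨p, hp⟩ := hex
    exact lower_bound Γ p hp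

end Lk
end

/-- In the Laakso space with `s = 3` and `m_i ≡ 3`, the distance between `x = [0,0]` and
`y = [1,1]` equals `1`; the infinite monotone path with lift `infLift` joins the two points
and its total `H¹`-length is `Σ_{i≥1} 1/3^i + 1/2 = 1`. -/
theorem laakso_three_infinite_geodesic :
    laaksoDist 3 (fun _ => 3)
        (laaksoPi 3 (fun _ => 3) ⟨((0:ℝ), 0), zero_mem_cantorF, by norm_num⟩)
        (laaksoPi 3 (fun _ => 3) ⟨((1:ℝ), 1), one_mem_cantorF, by norm_num⟩) = 1 ∧
    (∑' i : ℕ, (1:ℝ) / 3 ^ (i + 1)) + 1/2 = 1 ∧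
    μH[1] infLift = 1 ∧
    ∃ p : Path
        (laaksoPi 3 (fun _ => 3) ⟨((0:ℝ), 0), zero_mem_cantorF, by norm_num⟩)
        (laaksoPi 3 (fun _ => 3) ⟨((1:ℝ), 1), one_mem_cantorF, by norm_num⟩),
      laaksoPi 3 (fun _ => 3) '' infLift = Set.range p ∧
      Monotone (fun t => heightL 3 (fun _ => 3) (p t)) := by
  refine ⟨Lk.dist_eq_one, by rw [Lk.tsum_third]; norm_num, Lk.measure_infLift, Lk.pth, Lk.pi_image, Lk.height_mono⟩
end
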